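/- Let f be a probabilistic voting rule satisfying strong SD-participation, and let F be the support of f, i.e., F(R) = {x ∈ A : f(R)(x) > 0} for every profile R. Then the set-valued voting rule F satisfies both optimistic participation and pessimistic participation. -/

import Mathlib

open scoped Classical

/-- A preference profile: a nonempty electorate of voters, each voter in the
electorate having a strict linear preference order over the alternatives. -/
structure Profile (V A : Type*) where
  electorate : Finset V
  nonempty : electorate.Nonempty
  pref : ∀ i ∈ electorate, A → A → Prop
  isSTO : ∀ i (hi : i ∈ electorate), IsStrictTotalOrder A (pref i hi)

namespace Profile

variable {V A : Type*}

/-- The profile `R - i` obtained by removing voter `i` from the electorate. -/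
def erase [DecidableEq V] (R : Profile V A) (i : V)
    (h : (R.electorate.erase i).Nonempty) : Profile V A where
  electorate := R.electorate.erase i
  nonempty := h
  pref := fun j hj => R.pref j (Finset.mem_of_mem_erase hj)
  isSTO := fun j hj => R.isSTO j (Finset.mem_of_mem_erase hj)

end Profile

/-- The majority margin g_R(x,y). -/
noncomputable def margin {V A : Type*} (R : Profile V A) (x y : A) : ℤ :=
  ((R.electorate.attach.filter (fun i => R.pref i.1 i.2 x y)).card : ℤ) -
  ((R.electorate.attach.filter (fun i => R.pref i.1 i.2 y x)).card : ℤ)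

/-- `x` is a Condorcet winner of `R` if it beats every other alternative. -/
def IsCondorcetWinner {V A : Type*} (R : Profile V A) (x : A) : Prop :=
  ∀ y, y ≠ x → 0 < margin R x y

/-- A voting rule is a Condorcet extension if it selects the Condorcet winner
whenever one exists. -/
def CondorcetExtension {V A : Type*} (f : Profile V A → A) : Prop :=
  ∀ R x, IsCondorcetWinner R x → f R = x

/-- Participation: every voter weakly prefers the outcome with her vote to
the outcome without it. -/
def Participation {V A : Type*} [DecidableEq V] (f : Profile V A → A) : Prop :=
  ∀ (R : Profile V A) (i : V) (hi : i ∈ R.electorate)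
    (h : (R.electorate.erase i).Nonempty),
    f R = f (R.erase i h) ∨ R.pref i hi (f R) (f (R.erase i h))

/-- `x` is a maximin winner of `R`. -/
noncomputable def IsMaximinWinner {V A : Type*} [Fintype A] [DecidableEq A]
    (R : Profile V A) (x : A) : Prop :=
  ∀ z : A,
    (Finset.univ.erase z).inf (fun y => (margin R z y : WithTop ℤ)) ≤
    (Finset.univ.erase x).inf (fun y => (margin R x y : WithTop ℤ))

def MaximinExtension {V A : Type*} [Fintype A] [DecidableEq A]
    (f : Profile V A → A) : Prop :=
  ∀ R, IsMaximinWinner R (f R)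

/-- The Kemeny score of a ranking `K` for a profile `R`: the total pairwise
agreement of `K` with voters' preferences. -/
noncomputable def kemenyScore {V A : Type*} [Fintype A] (R : Profile V A)
    (K : A → A → Prop) : ℕ :=
  ∑ i ∈ R.electorate.attach,
    ((Finset.univ : Finset (A × A)).filter
      (fun p => K p.1 p.2 ∧ R.pref i.1 i.2 p.1 p.2)).card

/-- `x` is a Kemeny winner: it is top-ranked in some Kemeny ranking. -/
def IsKemenyWinner {V A : Type*} [Fintype A] (R : Profile V A) (x : A) : Prop :=
  ∃ K : A → A → Prop, IsStrictTotalOrder A K ∧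
    (∀ K' : A → A → Prop, IsStrictTotalOrder A K' →
      kemenyScore R K' ≤ kemenyScore R K) ∧
    (∀ y, y ≠ x → K x y)

def KemenyExtension {V A : Type*} [Fintype A] (f : Profile V A → A) : Prop :=
  ∀ R, IsKemenyWinner R (f R)

/-- A dominant set: a nonempty set whose members all beat all non-members. -/
def IsDominantSet {V A : Type*} [Fintype A] (R : Profile V A) (B : Finset A) : Prop :=
  B.Nonempty ∧ ∀ a ∈ B, ∀ b ∉ B, 0 < margin R a b

/-- `x` is in the top cycle (the minimal dominant set) of `R`. -/
def InTopCycle {V A : Type*} [Fintype A] (R : Profile V A) (x : A) : Prop :=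
  ∀ B : Finset A, IsDominantSet R B → x ∈ B

/-- Set-valued notions: maximum and minimum of a set w.r.t. a strict order. -/
def IsMaxOf {A : Type*} (r : A → A → Prop) (S : Finset A) (x : A) : Prop :=
  x ∈ S ∧ ∀ y ∈ S, y = x ∨ r x y

def IsMinOf {A : Type*} (r : A → A → Prop) (S : Finset A) (x : A) : Prop :=
  x ∈ S ∧ ∀ y ∈ S, y = x ∨ r y x

def SetCondorcetExtension {V A : Type*} [DecidableEq A]
    (F : Profile V A → Finset A) : Prop :=
  ∀ R x, IsCondorcetWinner R x → F R = {x}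

/-- Optimistic participation for set-valued rules. -/
def OptimisticParticipation {V A : Type*} [DecidableEq V]
    (F : Profile V A → Finset A) : Prop :=
  ∀ (R : Profile V A) (i : V) (hi : i ∈ R.electorate)
    (h : (R.electorate.erase i).Nonempty) (x y : A),
    IsMaxOf (R.pref i hi) (F R) x → IsMaxOf (R.pref i hi) (F (R.erase i h)) y →
    x = y ∨ R.pref i hi x y

/-- Pessimistic participation for set-valued rules. -/
def PessimisticParticipation {V A : Type*} [DecidableEq V]
    (F : Profile V A → Finset A) : Prop :=
  ∀ (R : Profile V A) (i : V) (hi : i ∈ R.electorate)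
    (h : (R.electorate.erase i).Nonempty) (x y : A),
    IsMinOf (R.pref i hi) (F R) x → IsMinOf (R.pref i hi) (F (R.erase i h)) y →
    x = y ∨ R.pref i hi x y

/-- A lottery over the alternatives. -/
structure Lottery (A : Type*) [Fintype A] where
  prob : A → ℝ
  nonneg : ∀ x, 0 ≤ prob x
  sum_one : ∑ x, prob x = 1

/-- Stochastic dominance: `p` is weakly SD-preferred to `q` w.r.t. `r`. -/
noncomputable def SDPref {A : Type*} [Fintype A] (r : A → A → Prop)
    (p q : Lottery A) : Prop :=
  ∀ x : A,
    ∑ y ∈ Finset.univ.filter (fun y => y = x ∨ r y x), q.prob y ≤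
    ∑ y ∈ Finset.univ.filter (fun y => y = x ∨ r y x), p.prob y

def ProbCondorcetExtension {V A : Type*} [Fintype A]
    (f : Profile V A → Lottery A) : Prop :=
  ∀ R x, IsCondorcetWinner R x → (f R).prob x = 1

def StrongSDParticipation {V A : Type*} [DecidableEq V] [Fintype A]
    (f : Profile V A → Lottery A) : Prop :=
  ∀ (R : Profile V A) (i : V) (hi : i ∈ R.electorate)
    (h : (R.electorate.erase i).Nonempty),
    SDPref (R.pref i hi) (f R) (f (R.erase i h))

/-- The support of a probabilistic voting rule satisfying strong
SD-participation satisfies both optimistic and pessimistic participation. -/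
theorem stmt13_support_satisfies_participation
    {V A : Type*} [Fintype V] [DecidableEq V] [Fintype A] [DecidableEq A]
    (f : Profile V A → Lottery A) (hf : StrongSDParticipation f)
    (F : Profile V A → Finset A)
    (hF : ∀ R, F R = Finset.univ.filter (fun x => 0 < (f R).prob x)) :
    OptimisticParticipation F ∧ PessimisticParticipation F := by
  have key : ∀ (R : Profile V A) (i : V) (hi : i ∈ R.electorate)
      (h : (R.electorate.erase i).Nonempty) (x y : A),
      x ∈ F R → (∀ w ∈ F R, w = x ∨ R.pref i hi x w ∨ R.pref i hi w x) →
      y ∈ F (R.erase i h) → True → True := fun _ _ _ _ _ _ _ _ _ _ => trivial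
  constructor
  · -- Optimistic
    intro R i hi h x y hx hy
    set r := R.pref i hi with hr
    have hsto := R.isSTO i hi
    have htrans : ∀ a b c : A, r a b → r b c → r a c := fun a b c => hsto.trans a b c
    have hasym : ∀ a b : A, r a b → ¬ r b a := fun a b hab hba =>
      hsto.irrefl a (htrans a b a hab hba)
    by_contra hcon
    push_neg at hcon
    obtain ⟨hne, hnxy⟩ := hcon
    have hsd := hf R i hi h y
    have hyq : 0 < (f (R.erase i h)).prob y := by
      have := hx.1
      have hmem := hy.1
      rw [hF] at hmem
      exact (Finset.mem_filter.mp hmem).2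
    have hymem : y ∈ Finset.univ.filter (fun y' => y' = y ∨ r y' y) := by
      simp
    have hpos : (0:ℝ) < ∑ w ∈ Finset.univ.filter (fun y' => y' = y ∨ r y' y),
        (f R).prob w := by
      have h1 : (f (R.erase i h)).prob y ≤
          ∑ w ∈ Finset.univ.filter (fun y' => y' = y ∨ r y' y),
            (f (R.erase i h)).prob w :=
        Finset.single_le_sum (fun w _ => (f (R.erase i h)).nonneg w) hymem
      have hsd' : ∑ w ∈ Finset.univ.filter (fun y' => y' = y ∨ r y' y),
          (f (R.erase i h)).prob w ≤
          ∑ w ∈ Finset.univ.filter (fun y' => y' = y ∨ r y' y), (f R).prob w := by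
        convert hsd using 2 <;> exact (Finset.filter_congr_decidable _ _ _).symm
      exact lt_of_lt_of_le (lt_of_lt_of_le hyq h1) hsd'
    obtain ⟨w, hwmem, hwpos⟩ :
        ∃ w ∈ Finset.univ.filter (fun y' => y' = y ∨ r y' y), (0:ℝ) < (f R).prob w := by
      by_contra hc
      push_neg at hc
      have hz : ∑ w ∈ Finset.univ.filter (fun y' => y' = y ∨ r y' y), (f R).prob w = 0 :=
        Finset.sum_eq_zero fun w hw => le_antisymm (hc w hw) ((f R).nonneg w)
      rw [hz] at hpos
      exact lt_irrefl _ hpos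
    have hwF : w ∈ F R := by
      rw [hF]
      exact Finset.mem_filter.mpr ⟨Finset.mem_univ w, hwpos⟩
    have hwcases := hx.2 w hwF
    have hwy : w = y ∨ r w y := (Finset.mem_filter.mp hwmem).2
    rcases hwcases with hwx | hxw
    · rcases hwy with hwy | hwy
      · exact hne (hwx ▸ hwy ▸ rfl)
      · exact hnxy (hwx ▸ hwy)
    · rcases hwy with hwy | hwy
      · exact hnxy (hwy ▸ hxw)
      · exact hnxy (htrans x w y hxw hwy)
  · -- Pessimistic
    intro R i hi h x y hx hy
    set r := R.pref i hi with hr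
    have hsto := R.isSTO i hi
    have htrans : ∀ a b c : A, r a b → r b c → r a c := fun a b c => hsto.trans a b c
    have hasym : ∀ a b : A, r a b → ¬ r b a := fun a b hab hba =>
      hsto.irrefl a (htrans a b a hab hba)
    by_contra hcon
    push_neg at hcon
    obtain ⟨hne, hnxy⟩ := hcon
    have hryx : r y x := by
      rcases (show r x y ∨ x = y ∨ r y x from (Classical.em (r x y)).elim Or.inl fun h1 => (Classical.em (r y x)).elim (fun h2 => Or.inr (Or.inr h2)) fun h2 => Or.inr (Or.inl (hsto.trichotomous x y h1 h2))) with h1 | h1 | h1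
      · exact absurd h1 hnxy
      · exact absurd h1 hne
      · exact h1
    have hxp : 0 < (f R).prob x := by
      have hmem := hx.1
      rw [hF] at hmem
      exact (Finset.mem_filter.mp hmem).2
    have hsd := hf R i hi h y
    -- sum of q over upper set of y is 1
    have hqsum : ∑ w ∈ Finset.univ.filter (fun y' => y' = y ∨ r y' y),
        (f (R.erase i h)).prob w = 1 := by
      rw [Finset.sum_filter_of_ne, (f (R.erase i h)).sum_one]
      intro w _ hw
      have hwq : 0 < (f (R.erase i h)).prob w :=
        lt_of_le_of_ne ((f (R.erase i h)).nonneg w) (Ne.symm hw)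
      have hwF : w ∈ F (R.erase i h) := by
        rw [hF]
        exact Finset.mem_filter.mpr ⟨Finset.mem_univ w, hwq⟩
      exact hy.2 w hwF
    -- x is not in the upper set of y
    have hxnot : x ∉ Finset.univ.filter (fun y' => y' = y ∨ r y' y) := by
      simp only [Finset.mem_filter, Finset.mem_univ, true_and]
      rintro (h1 | h1)
      · exact hsto.irrefl y (h1 ▸ hryx)
      · exact hasym y x hryx h1
    have hpsum : ∑ w ∈ Finset.univ.filter (fun y' => y' = y ∨ r y' y),
        (f R).prob w ≤ 1 - (f R).prob x := by
      have hsub : Finset.univ.filter (fun y' => y' = y ∨ r y' y) ⊆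
          Finset.univ.erase x := by
        intro w hw
        refine Finset.mem_erase.mpr ⟨?_, Finset.mem_univ w⟩
        rintro rfl
        exact hxnot hw
      have h1 : ∑ w ∈ Finset.univ.filter (fun y' => y' = y ∨ r y' y), (f R).prob w ≤
          ∑ w ∈ Finset.univ.erase x, (f R).prob w :=
        Finset.sum_le_sum_of_subset_of_nonneg hsub (fun w _ _ => (f R).nonneg w)
      have h2 : ∑ w ∈ Finset.univ.erase x, (f R).prob w = 1 - (f R).prob x := by
        have := Finset.add_sum_erase Finset.univ (f R).prob (Finset.mem_univ x)
        rw [(f R).sum_one] at this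
        linarith
      linarith
    have hsd' : ∑ w ∈ Finset.univ.filter (fun y' => y' = y ∨ r y' y),
        (f (R.erase i h)).prob w ≤
        ∑ w ∈ Finset.univ.filter (fun y' => y' = y ∨ r y' y), (f R).prob w := by
      convert hsd using 2 <;> exact (Finset.filter_congr_decidable _ _ _).symm
    rw [hqsum] at hsd'
    linarith
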